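/- arXiv:1201.2780 — 4 statements merged into one kernel-verified Lean document; each statement's English description precedes it below -/
import Mathlib

section
/- Let T be a finite rooted tree and let M ⊆ V(T) be a set of nodes such that for all u, v ∈ M the least common ancestor of u and v belongs to M. Let T' be a nonempty subtree (connected subgraph) of T with V(T') ∩ M = ∅. Then at most two nodes of M are adjacent in T to a node of T'. -/
/-- In a tree `T` rooted at `root`, `u` is an ancestor of `v` if `u` lies on every
(equivalently, by uniqueness of paths in a tree, on the) path from `root` to `v`.
Every node is an ancestor of itself. -/
def IsAncestor {V : Type*} (T : SimpleGraph V) (root u v : V) : Prop :=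
  ∀ p : T.Walk root v, p.IsPath → u ∈ p.support

/-- In a tree `T` rooted at `root`, `m` is the least common ancestor of `u` and `v` if it is
a common ancestor of `u` and `v` of greatest depth (depth being the distance from the root). -/
def IsLCA {V : Type*} (T : SimpleGraph V) (root u v m : V) : Prop :=
  IsAncestor T root m u ∧ IsAncestor T root m v ∧
    ∀ w : V, IsAncestor T root w u → IsAncestor T root w v →
      T.dist root w ≤ T.dist root m

set_option linter.unusedSectionVars false
set_option linter.unusedVariables false

open SimpleGraph Walk

section Aux
variable {V : Type*} [DecidableEq V] {T : SimpleGraph V}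

noncomputable def tpath (hT : T.IsTree) (u v : V) : T.Walk u v :=
  (hT.existsUnique_path u v).exists.choose

lemma tpath_isPath (hT : T.IsTree) (u v : V) : (tpath hT u v).IsPath :=
  (hT.existsUnique_path u v).exists.choose_spec

lemma tpath_eq (hT : T.IsTree) {u v : V} (p : T.Walk u v) (hp : p.IsPath) :
    p = tpath hT u v :=
  (hT.existsUnique_path u v).unique hp (tpath_isPath hT u v)

lemma length_tpath (hT : T.IsTree) (u v : V) :
    (tpath hT u v).length = T.dist u v := by
  obtain ⟨p, hp, hl⟩ := hT.isConnected.exists_path_of_dist u v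
  rw [← tpath_eq hT p hp]; exact hl

lemma isAncestor_iff (hT : T.IsTree) {root u v : V} :
    IsAncestor T root u v ↔ u ∈ (tpath hT root v).support := by
  constructor
  · exact fun h => h _ (tpath_isPath hT root v)
  · intro h p hp; rw [tpath_eq hT p hp]; exact h

lemma dist_eq_length_takeUntil (hT : T.IsTree) {root v x : V} {p : T.Walk root v}
    (hp : p.IsPath) (hx : x ∈ p.support) :
    T.dist root x = (p.takeUntil x hx).length := by
  rw [← length_tpath hT root x, ← tpath_eq hT _ (hp.takeUntil hx)]

lemma ancestor_dist_le (hT : T.IsTree) {root u v : V} (h : IsAncestor T root u v) :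
    T.dist root u ≤ T.dist root v := by
  have hm := (isAncestor_iff hT).1 h
  rw [← length_tpath hT root v,
    dist_eq_length_takeUntil hT (tpath_isPath hT root v) hm]
  exact length_takeUntil_le _ hm

lemma ancestor_eq_of_dist_le (hT : T.IsTree) {root u v : V} (h : IsAncestor T root u v)
    (hd : T.dist root v ≤ T.dist root u) : u = v := by
  have hm := (isAncestor_iff hT).1 h
  set p := tpath hT root v with hp
  have hlen : T.dist root u = (p.takeUntil u hm).length :=
    dist_eq_length_takeUntil hT (tpath_isPath hT root v) hm
  have hspec := congrArg Walk.length (p.take_spec hm)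
  rw [length_append] at hspec
  have hpl : p.length = T.dist root v := length_tpath hT root v
  have h0 : (p.dropUntil u hm).length = 0 := by omega
  exact eq_of_length_eq_zero h0

lemma ancestor_antisymm (hT : T.IsTree) {root u v : V} (h1 : IsAncestor T root u v)
    (h2 : IsAncestor T root v u) : u = v :=
  ancestor_eq_of_dist_le hT h1 (ancestor_dist_le hT h2)

lemma ancestor_trans (hT : T.IsTree) {root u v w : V} (h1 : IsAncestor T root u v)
    (h2 : IsAncestor T root v w) : IsAncestor T root u w := by
  intro p hp
  have hv : v ∈ p.support := h2 p hp
  have : u ∈ (p.takeUntil v hv).support := h1 _ (hp.takeUntil hv)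
  exact support_takeUntil_subset _ hv this

lemma dist_lt_of_mem_dropUntil_tail (hT : T.IsTree) {root v m x : V} {q : T.Walk root v}
    (hq : q.IsPath) (hm : m ∈ q.support) (hx : x ∈ (q.dropUntil m hm).support.tail) :
    T.dist root m < T.dist root x := by
  set q2 := q.dropUntil m hm with hq2def
  have hq2path : q2.IsPath := hq.dropUntil hm
  have hxs : x ∈ q2.support := List.mem_of_mem_tail hx
  have hmtail : m ∉ q2.support.tail := by
    have := hq2path.support_nodup
    rw [q2.support_eq_cons] at this
    exact (List.nodup_cons.1 this).1
  have hxm : x ≠ m := fun h => hmtail (h ▸ hx)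
  set W := (q.takeUntil m hm).append (q2.takeUntil x hxs) with hWdef
  have hndq : ((q.takeUntil m hm).support ++ q2.support.tail).Nodup := by
    rw [← support_append, q.take_spec]; exact hq.support_nodup
  have hsub : (q2.takeUntil x hxs).support.tail ⊆ q2.support.tail := by
    intro y hy
    have h1 : q2.support.tail
        = (q2.takeUntil x hxs).support.tail ++ (q2.dropUntil x hxs).support.tail := by
      conv_lhs => rw [← q2.take_spec hxs]
      rw [support_append, List.tail_append_of_ne_nil (support_ne_nil _)]
    rw [h1]; exact List.mem_append_left _ hy
  have hWpath : W.IsPath := by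
    rw [isPath_def, support_append]
    refine List.Nodup.append (hq.takeUntil hm).support_nodup
      ?_ ?_
    · have := (hq2path.takeUntil hxs).support_nodup
      exact this.tail
    · intro y hy1 hy2
      exact (List.nodup_append.1 hndq).2.2 y hy1 y (hsub hy2) rfl
  have hdx : T.dist root x = W.length := by
    rw [← length_tpath hT root x, ← tpath_eq hT W hWpath]
  have hdm : T.dist root m = (q.takeUntil m hm).length :=
    dist_eq_length_takeUntil hT hq hm
  have hWlen : W.length = (q.takeUntil m hm).length + (q2.takeUntil x hxs).length :=
    length_append _ _
  have hpos : 0 < (q2.takeUntil x hxs).length := by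
    rcases Nat.eq_zero_or_pos (q2.takeUntil x hxs).length with h0 | h
    · exact absurd (eq_of_length_eq_zero h0).symm hxm
    · exact h
  omega


lemma exists_isLCA (hT : T.IsTree) (root u v : V) :
    ∃ m, IsLCA T root u v m ∧ m ∈ (tpath hT u v).support := by
  set p := tpath hT root u with hpdef
  set q := tpath hT root v with hqdef
  set A : Finset V := p.support.toFinset ∩ q.support.toFinset with hAdef
  have hroot : root ∈ A := by
    simp only [hAdef, Finset.mem_inter, List.mem_toFinset]
    exact ⟨p.start_mem_support, q.start_mem_support⟩
  obtain ⟨m, hmA, hmax⟩ := A.exists_max_image (fun w => T.dist root w) ⟨root, hroot⟩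
  rw [hAdef, Finset.mem_inter, List.mem_toFinset, List.mem_toFinset] at hmA
  obtain ⟨hmp, hmq⟩ := hmA
  have hmaxd : ∀ x, x ∈ p.support → x ∈ q.support → T.dist root x ≤ T.dist root m := by
    intro x h1 h2
    exact hmax x (by simp only [hAdef, Finset.mem_inter, List.mem_toFinset]; exact ⟨h1, h2⟩)
  set p2 := p.dropUntil m hmp with hp2def
  set q2 := q.dropUntil m hmq with hq2def
  have hp2path : p2.IsPath := (tpath_isPath hT root u).dropUntil hmp
  have hq2path : q2.IsPath := (tpath_isPath hT root v).dropUntil hmq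
  set W := p2.reverse.append q2 with hWdef
  have hdisj : ∀ x ∈ p2.support, x ∈ q2.support.tail → False := by
    intro x hxp hxq
    have hmtail : m ∉ q2.support.tail := by
      have := hq2path.support_nodup
      rw [q2.support_eq_cons] at this
      exact (List.nodup_cons.1 this).1
    have hxm : x ≠ m := fun h => hmtail (h ▸ hxq)
    have hxp' : x ∈ p2.support.tail := by
      rw [p2.support_eq_cons] at hxp
      rcases List.mem_cons.1 hxp with h | h
      · exact absurd h hxm
      · exact h
    have h1 := dist_lt_of_mem_dropUntil_tail hT (tpath_isPath hT root u) hmp hxp'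
    have h2 := hmaxd x (support_dropUntil_subset p hmp (List.mem_of_mem_tail hxp'))
      (support_dropUntil_subset q hmq (List.mem_of_mem_tail hxq))
    omega
  have hWpath : W.IsPath := by
    rw [isPath_def, support_append, support_reverse]
    refine List.Nodup.append (List.nodup_reverse.2 hp2path.support_nodup) hq2path.support_nodup.tail ?_
    intro y hy1 hy2
    exact hdisj y (List.mem_reverse.1 hy1) hy2
  have hmW : m ∈ W.support := by
    rw [hWdef, mem_support_append_iff]
    left
    exact p2.reverse.end_mem_support
  refine ⟨m, ⟨(isAncestor_iff hT).2 hmp, (isAncestor_iff hT).2 hmq, ?_⟩, ?_⟩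
  · intro w hwu hwv
    exact hmaxd w ((isAncestor_iff hT).1 hwu) ((isAncestor_iff hT).1 hwv)
  · rw [← tpath_eq hT W hWpath]
    exact hmW

lemma tpath_support_subset (hT : T.IsTree) {S : Set V} (hconn : (T.induce S).Connected)
    {a b sa sb : V} (hsa : sa ∈ S) (hsb : sb ∈ S) (ha : T.Adj a sa) (hb : T.Adj b sb)
    (hna : a ∉ S) (hnb : b ∉ S) (hab : a ≠ b) :
    ∀ x ∈ (tpath hT a b).support, x = a ∨ x = b ∨ x ∈ S := by
  obtain ⟨w⟩ := hconn.preconnected ⟨sa, hsa⟩ ⟨sb, hsb⟩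
  set w' := w.map (SimpleGraph.Embedding.induce S).toHom with hw'def
  set pb : T.Walk sa sb := w'.bypass with hpbdef
  have hpb : pb.IsPath := w'.bypass_isPath
  have hpbS : ∀ x ∈ pb.support, x ∈ S := by
    intro x hx
    have hx' := w'.support_bypass_subset hx
    rw [hw'def, Walk.support_map] at hx'
    obtain ⟨y, _, rfl⟩ := List.mem_map.1 hx'
    exact y.2
  set W := Walk.cons ha (pb.concat hb.symm) with hWdef
  have hWp : W.IsPath := by
    rw [isPath_def, hWdef, Walk.support_cons, Walk.support_concat,
      List.nodup_cons]
    constructor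
    · intro hmem
      rcases List.mem_append.1 hmem with h | h
      · exact hna (hpbS a h)
      · exact hab (List.mem_singleton.1 h)
    · refine List.Nodup.append hpb.support_nodup (List.nodup_singleton b) ?_
      intro y hy1 hy2
      rw [List.mem_singleton] at hy2
      subst hy2
      exact hnb (hpbS y hy1)
  intro x hx
  rw [← tpath_eq hT W hWp, hWdef, Walk.support_cons, Walk.support_concat] at hx
  rcases List.mem_cons.1 hx with h | h
  · exact Or.inl h
  · rcases List.mem_append.1 h with h | h
    · exact Or.inr (Or.inr (hpbS x h))
    · exact Or.inr (Or.inl (List.mem_singleton.1 h))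

end Aux


/-- Let `T` be a finite rooted tree and `M` a set of nodes closed under least common
ancestors.  If `T'` is a nonempty subtree (connected subgraph, given by its vertex set `S`)
of `T` containing no node of `M`, then at most two nodes of `M` are adjacent in `T` to a
node of `T'`. -/
theorem lca_closed_neighbors_of_unmarked_subtree {V : Type*} [Fintype V]
    (T : SimpleGraph V) (hT : T.IsTree) (root : V)
    (M : Set V)
    (hM : ∀ u ∈ M, ∀ v ∈ M, ∀ m : V, IsLCA T root u v m → m ∈ M)
    (S : Set V) (hS : S.Nonempty) (hconn : (T.induce S).Connected)
    (hdisj : S ∩ M = ∅) :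
    {m ∈ M | ∃ v ∈ S, T.Adj m v}.ncard ≤ 2 := by
  classical
  by_contra hcard
  push_neg at hcard
  set N := {m ∈ M | ∃ v ∈ S, T.Adj m v} with hNdef
  have hfin : N.Finite := Set.toFinite N
  rw [Set.ncard_eq_toFinset_card N hfin] at hcard
  obtain ⟨a, b, c, haf, hbf, hcf, hab, hac, hbc⟩ := Finset.two_lt_card_iff.1 hcard
  rw [hfin.mem_toFinset] at haf hbf hcf
  have hnotS : ∀ x ∈ N, x ∉ S := fun x hx hxS =>
    Set.eq_empty_iff_forall_notMem.1 hdisj x ⟨hxS, hx.1⟩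
  have hcomp : ∀ x ∈ N, ∀ y ∈ N, x ≠ y →
      IsAncestor T root x y ∨ IsAncestor T root y x := by
    intro x hx y hy hxy
    obtain ⟨sx, hsx, haxs⟩ := hx.2
    obtain ⟨sy, hsy, hays⟩ := hy.2
    obtain ⟨m, hlca, hmem⟩ := exists_isLCA hT root x y
    have hmM : m ∈ M := hM x hx.1 y hy.1 m hlca
    rcases tpath_support_subset hT hconn hsx hsy haxs hays (hnotS x hx) (hnotS y hy)
      hxy m hmem with rfl | rfl | hmS
    · exact Or.inl hlca.2.1
    · exact Or.inr hlca.1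
    · exact absurd ⟨hmS, hmM⟩ (Set.eq_empty_iff_forall_notMem.1 hdisj m)
  have hchain : ∀ x ∈ N, ∀ y ∈ N, ∀ z ∈ N, x ≠ y → y ≠ z → x ≠ z →
      IsAncestor T root x y → IsAncestor T root y z → False := by
    intro x hx y hy z hz hxy hyz hxz h1 h2
    have hxz' : IsAncestor T root x z := ancestor_trans hT h1 h2
    set p := tpath hT root z with hpdef
    have hppath : p.IsPath := tpath_isPath hT root z
    have hxp : x ∈ p.support := (isAncestor_iff hT).1 hxz'
    have hyp : y ∈ p.support := (isAncestor_iff hT).1 h2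
    have hysplit : y ∈ (p.takeUntil x hxp).support ++ (p.dropUntil x hxp).support.tail := by
      rw [← SimpleGraph.Walk.support_append, p.take_spec]; exact hyp
    have hydrop : y ∈ (p.dropUntil x hxp).support := by
      rcases List.mem_append.1 hysplit with h | h
      · exfalso
        have hyx : IsAncestor T root y x := by
          rw [isAncestor_iff hT, ← tpath_eq hT _ (hppath.takeUntil hxp)]; exact h
        exact hxy (ancestor_antisymm hT h1 hyx)
      · exact List.mem_of_mem_tail h
    have heq : p.dropUntil x hxp = tpath hT x z := tpath_eq hT _ (hppath.dropUntil hxp)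
    rw [heq] at hydrop
    obtain ⟨sx, hsx, haxs⟩ := hx.2
    obtain ⟨sz, hsz, hazs⟩ := hz.2
    rcases tpath_support_subset hT hconn hsx hsz haxs hazs (hnotS x hx) (hnotS z hz)
      hxz y hydrop with h | h | h
    · exact hxy h.symm
    · exact hyz h
    · exact Set.eq_empty_iff_forall_notMem.1 hdisj y ⟨h, hy.1⟩
  rcases hcomp a haf b hbf hab with h1 | h1 <;> rcases hcomp b hbf c hcf hbc with h2 | h2
  · exact hchain a haf b hbf c hcf hab hbc hac h1 h2
  · rcases hcomp a haf c hcf hac with h3 | h3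
    · exact hchain a haf c hcf b hbf hac (Ne.symm hbc) hab h3 h2
    · exact hchain c hcf a haf b hbf (Ne.symm hac) hab (Ne.symm hbc) h3 h1
  · rcases hcomp a haf c hcf hac with h3 | h3
    · exact hchain b hbf a haf c hcf (Ne.symm hab) hac hbc h1 h3
    · exact hchain b hbf c hcf a haf hbc (Ne.symm hac) (Ne.symm hab) h2 h3
  · exact hchain c hcf b hbf a haf (Ne.symm hbc) (Ne.symm hab) (Ne.symm hac) h2 h1
end

section
/- Let (T, {X_i}_{i∈V(T)}) be a tree decomposition of a connected finite simple graph G, let b be a node of T whose bag B = X_b is nonempty, let t₁, …, t_p be some of the neighbors of b in T, let T_i be the connected component of T − b containing t_i, and let V_i be the union of the bags of the nodes of T_i. Then the induced subgraph G[B ∪ V₁ ∪ ⋯ ∪ V_p] has at most |B| connected components. -/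
/-- A tree decomposition of a graph `G` over a tree `T`: every vertex lies in some bag,
every edge has both endpoints in a common bag, and for each vertex the set of nodes whose
bag contains it induces a subtree of `T`. -/
structure TreeDecomp {V ι : Type*} (G : SimpleGraph V) (T : SimpleGraph ι) where
  isTree : T.IsTree
  bag : ι → Set V
  exists_bag : ∀ v : V, ∃ i : ι, v ∈ bag i
  adj_bag : ∀ ⦃u v : V⦄, G.Adj u v → ∃ i : ι, u ∈ bag i ∧ v ∈ bag i
  bag_connected : ∀ v : V, (T.induce {i : ι | v ∈ bag i}).Connected

/-- Let `(T, {X_i})` be a tree decomposition of a connected finite simple graph `G`, `b` a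
node of `T` with nonempty bag `B`, `t₁, …, t_p` some neighbors of `b` in `T`, `T_i` the
connected component of `T − b` containing `t_i` (described via walks avoiding `b`), and
`V_i` the union of the bags of the nodes of `T_i`.  Then `G[B ∪ V₁ ∪ ⋯ ∪ V_p]` has at most
`|B|` connected components. -/
theorem components_le_bag_card {V ι : Type*} [Fintype V] [Fintype ι]
    (G : SimpleGraph V) (hG : G.Connected)
    (T : SimpleGraph ι) (td : TreeDecomp G T)
    (b : ι) (hb : (td.bag b).Nonempty)
    (p : ℕ) (t : Fin p → ι) (ht : ∀ i, T.Adj b (t i))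
    (Vi : Fin p → Set V)
    (hVi : ∀ i, Vi i = ⋃ j ∈ {j : ι | ∃ w : T.Walk (t i) j, b ∉ w.support}, td.bag j) :
    Nat.card (G.induce (td.bag b ∪ ⋃ i, Vi i)).ConnectedComponent ≤ (td.bag b).ncard := by
  classical
  set S : Set V := td.bag b ∪ ⋃ i, Vi i with hS
  have key : ∀ {v w : V} (q : G.Walk v w), w ∈ td.bag b → ∀ hv : v ∈ S,
      ∃ u, ∃ hu : u ∈ td.bag b, (G.induce S).Reachable ⟨v, hv⟩ ⟨u, Or.inl hu⟩ := by
    intro v w q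
    induction q with
    | nil =>
      intro hw hv
      exact ⟨_, hw, SimpleGraph.Reachable.refl _⟩
    | @cons v v' w h q ih =>
      intro hw hv
      by_cases hvB : v ∈ td.bag b
      · exact ⟨v, hvB, SimpleGraph.Reachable.refl _⟩
      · have hvU : v ∈ ⋃ i, Vi i := hv.resolve_left hvB
        obtain ⟨i, hvi⟩ := Set.mem_iUnion.mp hvU
        rw [hVi i] at hvi
        obtain ⟨j, hj, hvj⟩ := Set.mem_iUnion₂.mp hvi
        obtain ⟨wj, hwj⟩ := hj
        -- the edge v v' lies in some bag k
        obtain ⟨k, hvk, hv'k⟩ := td.adj_bag h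
        -- walk from j to k in T inside {m | v ∈ bag m}, which avoids b
        have hr := (td.bag_connected v).preconnected ⟨j, hvj⟩ ⟨k, hvk⟩
        obtain ⟨pjk⟩ := hr
        have hpk : ∃ wk : T.Walk (t i) k, b ∉ wk.support := by
          let pjk' : T.Walk (j : ι) (k : ι) :=
            pjk.map (SimpleGraph.Embedding.induce {m : ι | v ∈ td.bag m}).toHom
          refine ⟨wj.append pjk', ?_⟩
          rw [SimpleGraph.Walk.support_append]
          intro hmem
          rcases List.mem_append.mp hmem with h1 | h2
          · exact hwj h1
          · have h2' : b ∈ pjk'.support := List.mem_of_mem_tail h2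
            rw [show pjk'.support = _ from SimpleGraph.Walk.support_map _ _] at h2'
            obtain ⟨m, hm, hmb⟩ := List.mem_map.mp h2'
            have hmb' : (m : ι) = b := hmb
            exact hvB (hmb' ▸ m.2)
        have hv'S : v' ∈ S := by
          refine Or.inr (Set.mem_iUnion.mpr ⟨i, ?_⟩)
          rw [hVi i]
          exact Set.mem_iUnion₂.mpr ⟨k, hpk, hv'k⟩
        obtain ⟨u, hu, hr⟩ := ih hw hv'S
        refine ⟨u, hu, SimpleGraph.Reachable.trans ?_ hr⟩
        exact SimpleGraph.Adj.reachable (by exact h : (G.induce S).Adj ⟨v, hv⟩ ⟨v', hv'S⟩)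
  -- surjection from the bag onto connected components
  have hsurj : Function.Surjective
      (fun u : td.bag b =>
        (G.induce S).connectedComponentMk ⟨u.1, Or.inl u.2⟩) := by
    intro c
    obtain ⟨x, rfl⟩ := c.exists_rep
    obtain ⟨b₀, hb₀⟩ := hb
    obtain ⟨q⟩ := hG.preconnected x.1 b₀
    obtain ⟨u, hu, hr⟩ := key q hb₀ x.2
    exact ⟨⟨u, hu⟩, (SimpleGraph.ConnectedComponent.sound hr).symm⟩
  calc Nat.card (G.induce S).ConnectedComponent ≤ Nat.card (td.bag b) :=
        Nat.card_le_card_of_surjective _ hsurj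
    _ = (td.bag b).ncard := Nat.card_coe_set_eq _
end

section
/- Let (T, {X_q}_{q∈V(T)}) be a tree decomposition of a finite simple graph G in which every bag has size at most t, let P be a path in T, and for each node q of P let Y_q be the union of the bags of all connected components of T − V(P) whose unique neighbor on P is q. If |Y_q| ≤ s for every node q of P, then the sequence (X_q ∪ Y_q), taken along the nodes q of P in order, is a path decomposition of G; in particular G has pathwidth at most t + s − 1. -/
section Aux

open SimpleGraph

variable {ι : Type*} {T : SimpleGraph ι}

private lemma walk_segment {a b : ι} (P : T.Walk a b) :
    ∀ i j : ℕ, i ≤ j → j ≤ P.length →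
    ∃ W : T.Walk (P.getVert i) (P.getVert j),
      ∀ x ∈ W.support, ∃ r, i ≤ r ∧ r ≤ j ∧ P.getVert r = x := by
  induction P with
  | nil =>
    intro i j hij _
    refine ⟨Walk.nil, fun x hx => ⟨i, le_rfl, hij, ?_⟩⟩
    have hx : x = _ := List.mem_singleton.mp hx
    simp [Walk.getVert, hx]
  | cons h p ih =>
    intro i j hij hj
    cases i with
    | zero =>
      cases j with
      | zero =>
        refine ⟨Walk.nil, fun x hx => ⟨0, le_rfl, le_rfl, ?_⟩⟩
        simp only [Walk.support_nil, List.mem_singleton] at hx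
        simp [hx]
      | succ j =>
        obtain ⟨W, hW⟩ := ih 0 j (Nat.zero_le _) (by simpa using hj)
        refine ⟨Walk.cons h (W.copy p.getVert_zero rfl), ?_⟩
        intro x hx
        have hcopy := Walk.support_copy W p.getVert_zero (rfl : p.getVert j = (Walk.cons h p).getVert (j + 1))
        replace hx : x ∈ (Walk.cons h p).getVert 0 :: W.support := by rw [← hcopy]; exact hx
        rcases List.mem_cons.mp hx with rfl | hx'
        · exact ⟨0, le_rfl, Nat.zero_le _, rfl⟩
        · obtain ⟨r, _, hrj, hr⟩ := hW x hx'
          exact ⟨r + 1, Nat.zero_le _, Nat.succ_le_succ hrj, hr⟩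
    | succ i =>
      cases j with
      | zero => omega
      | succ j =>
        obtain ⟨W, hW⟩ := ih i j (Nat.succ_le_succ_iff.mp hij) (by simpa using hj)
        refine ⟨W, fun x hx => ?_⟩
        obtain ⟨r, h1, h2, h3⟩ := hW x hx
        exact ⟨r + 1, Nat.succ_le_succ h1, Nat.succ_le_succ h2, h3⟩

private lemma support_getElem_eq {a b : ι} (P : T.Walk a b) :
    ∀ (n : ℕ) (hn : n < P.support.length), P.support[n] = P.getVert n := by
  induction P with
  | nil =>
    intro n hn
    simp only [Walk.support_nil, List.length_singleton] at hn
    interval_cases n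
    rfl
  | cons h p ih =>
    intro n hn
    cases n with
    | zero => rfl
    | succ n =>
      simp only [Walk.support_cons, List.getElem_cons_succ, Walk.getVert_cons_succ]
      exact ih n (by simpa using hn)

private lemma path_getVert_inj {a b : ι} {P : T.Walk a b} (hP : P.IsPath) {i j : ℕ}
    (hi : i ≤ P.length) (hj : j ≤ P.length) (hij : P.getVert i = P.getVert j) : i = j := by
  have hi' : i < P.support.length := by rw [Walk.length_support]; omega
  have hj' : j < P.support.length := by rw [Walk.length_support]; omega
  refine (hP.support_nodup.getElem_inj_iff (hi := hi') (hj := hj')).mp ?_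
  rw [support_getElem_eq P i hi', support_getElem_eq P j hj']
  exact hij

private lemma mid_mem_support (hT : T.IsAcyclic) {u z v : ι}
    (huz : T.Adj u z) (hzv : T.Adj z v) (huv : u ≠ v) (w : T.Walk u v) : z ∈ w.support := by
  classical
  by_contra hz
  have hq : (Walk.cons huz (Walk.cons hzv Walk.nil)).IsPath := by
    simp [Walk.isPath_def, huz.ne, hzv.ne, huv]
  have heq := hT.path_unique w.toPath ⟨_, hq⟩
  have hzp : z ∈ (w.toPath : T.Walk u v).support := by
    rw [Subtype.ext_iff] at heq
    rw [heq]
    simp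
  exact hz (Walk.support_toPath_subset w hzp)

private lemma sep_middle (hT : T.IsAcyclic) {a b : ι} {P : T.Walk a b} (hP : P.IsPath)
    {i m k : ℕ} (him : i < m) (hmk : m < k) (hk : k ≤ P.length)
    (W : T.Walk (P.getVert i) (P.getVert k)) : P.getVert m ∈ W.support := by
  by_contra hz
  obtain ⟨W1, hW1⟩ := walk_segment P i (m - 1) (by omega) (by omega)
  obtain ⟨W2, hW2⟩ := walk_segment P (m + 1) k (by omega) hk
  have h1 : P.getVert m ∉ W1.support := by
    intro hmem
    obtain ⟨r, hir, hrm, hr⟩ := hW1 _ hmem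
    have := path_getVert_inj hP (i := r) (j := m) (by omega) (by omega) hr
    omega
  have h2 : P.getVert m ∉ W2.support := by
    intro hmem
    obtain ⟨r, hir, hrm, hr⟩ := hW2 _ hmem
    have := path_getVert_inj hP (i := r) (j := m) (by omega) (by omega) hr
    omega
  have hne : P.getVert (m - 1) ≠ P.getVert (m + 1) := by
    intro h
    have := path_getVert_inj hP (i := m - 1) (j := m + 1) (by omega) (by omega) h
    omega
  have hadj1 : T.Adj (P.getVert (m - 1)) (P.getVert m) := by
    have := P.adj_getVert_succ (i := m - 1) (by omega)
    rwa [show m - 1 + 1 = m by omega] at this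
  have hadj2 : T.Adj (P.getVert m) (P.getVert (m + 1)) := P.adj_getVert_succ (by omega)
  have hmid := mid_mem_support hT hadj1 hadj2 hne ((W1.reverse.append W).append W2.reverse)
  rw [Walk.mem_support_append_iff, Walk.mem_support_append_iff] at hmid
  rcases hmid with (hmid | hmid) | hmid
  · rw [Walk.support_reverse, List.mem_reverse] at hmid; exact h1 hmid
  · exact hz hmid
  · rw [Walk.support_reverse, List.mem_reverse] at hmid; exact h2 hmid

private lemma attach_aux {a b : ι} (P : T.Walk a b) :
    ∀ {j c : ι} (_ : T.Walk j c), c ∈ P.support → j ∉ P.support →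
      ∃ q ∈ P.support, ∃ j' : ι,
        (∃ w : T.Walk j j', ∀ x ∈ w.support, x ∉ P.support) ∧ T.Adj j' q := by
  intro j c p
  induction p with
  | nil => intro hc hj; exact absurd hc hj
  | @cons j d c hadj p ih =>
    intro hc hj
    by_cases hd : d ∈ P.support
    · exact ⟨d, hd, j, ⟨Walk.nil, by simpa using hj⟩, hadj⟩
    · obtain ⟨q, hq, j', ⟨w, hw⟩, hadj'⟩ := ih hc hd
      refine ⟨q, hq, j', ⟨Walk.cons hadj w, ?_⟩, hadj'⟩
      intro x hx
      rw [Walk.support_cons] at hx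
      rcases List.mem_cons.mp hx with rfl | hx'
      · exact hj
      · exact hw x hx'

end Aux

/-- A (finite) list `L` of bags is a path decomposition of `G` if every vertex lies in some
bag, every edge has both endpoints in a common bag, and for every vertex the set of indices
of bags containing it is an interval of consecutive integers. -/
def IsPathDecomp {V : Type*} (G : SimpleGraph V) (L : List (Set V)) : Prop :=
  (∀ v : V, ∃ B ∈ L, v ∈ B) ∧
  (∀ ⦃u v : V⦄, G.Adj u v → ∃ B ∈ L, u ∈ B ∧ v ∈ B) ∧
  (∀ (v : V) (i j k : Fin L.length), i ≤ j → j ≤ k →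
    v ∈ L.get i → v ∈ L.get k → v ∈ L.get j)

/-- Let `(T, {X_q})` be a tree decomposition of `G` with all bags of size at most `t`, `P` a
path in `T`, and for each node `q` of `P` let `Y_q` be the union of the bags of all
connected components of `T − V(P)` whose unique neighbor on `P` is `q`.  If `|Y_q| ≤ s` for
every node `q` of `P`, then the bags `X_q ∪ Y_q`, taken along the nodes `q` of `P` in order,
form a path decomposition of `G`; in particular (all its bags having size at most `t + s`)
`G` has pathwidth at most `t + s − 1`. -/
theorem pathDecomp_along_path {V ι : Type*} [Fintype V] [Fintype ι]
    (G : SimpleGraph V) (T : SimpleGraph ι) (td : TreeDecomp G T)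
    (t s : ℕ) (hbags : ∀ i : ι, (td.bag i).ncard ≤ t)
    (a b : ι) (P : T.Walk a b) (hP : P.IsPath)
    (Y : ι → Set V)
    (hY : ∀ q : ι, Y q =
      ⋃ j ∈ {j : ι | j ∉ P.support ∧ ∃ j' : ι,
          (∃ w : T.Walk j j', ∀ x ∈ w.support, x ∉ P.support) ∧ T.Adj j' q},
        td.bag j)
    (hYs : ∀ q ∈ P.support, (Y q).ncard ≤ s) :
    IsPathDecomp G (P.support.map fun q => td.bag q ∪ Y q) ∧
      ∀ B ∈ P.support.map fun q => td.bag q ∪ Y q, B.ncard ≤ t + s := by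
  classical
  set f : ι → Set V := fun q => td.bag q ∪ Y q with hf
  have hTacyc := td.isTree.IsAcyclic
  have hsl : P.support.length = P.length + 1 := P.length_support
  have hmemY : ∀ (q j : ι), j ∉ P.support →
      (∃ j' : ι, (∃ w : T.Walk j j', ∀ x ∈ w.support, x ∉ P.support) ∧ T.Adj j' q) →
      td.bag j ⊆ Y q := by
    intro q j hj hatt u hu
    rw [hY q]
    exact Set.mem_biUnion ⟨hj, hatt⟩ hu
  have hcover : ∀ j : ι, ∃ q ∈ P.support, td.bag j ⊆ f q := by
    intro j
    by_cases hj : j ∈ P.support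
    · exact ⟨j, hj, Set.subset_union_left⟩
    · obtain ⟨p⟩ := (td.isTree.isConnected).preconnected j a
      obtain ⟨q, hq, hatt⟩ := attach_aux P p P.start_mem_support hj
      exact ⟨q, hq, (hmemY q j hj hatt).trans Set.subset_union_right⟩
  refine ⟨⟨?_, ?_, ?_⟩, ?_⟩
  · intro v
    obtain ⟨i0, hv⟩ := td.exists_bag v
    obtain ⟨q, hq, hsub⟩ := hcover i0
    exact ⟨f q, List.mem_map_of_mem (f := f) hq, hsub hv⟩
  · intro u v huv
    obtain ⟨i0, hu, hv⟩ := td.adj_bag huv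
    obtain ⟨q, hq, hsub⟩ := hcover i0
    exact ⟨f q, List.mem_map_of_mem (f := f) hq, hsub hu, hsub hv⟩
  · intro v i j k hij hjk hvi hvk
    have hlen : (P.support.map f).length = P.support.length := by simp
    have hi : (i : ℕ) < P.support.length := by rw [← hlen]; exact i.isLt
    have hj : (j : ℕ) < P.support.length := by rw [← hlen]; exact j.isLt
    have hk : (k : ℕ) < P.support.length := by rw [← hlen]; exact k.isLt
    have hget : ∀ (r : Fin (P.support.map f).length) (hr : (r : ℕ) < P.support.length),
        (P.support.map f).get r = f (P.getVert r) := by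
      intro r hr
      rw [List.get_eq_getElem, List.getElem_map, support_getElem_eq P r hr]
    rw [hget i hi] at hvi
    rw [hget k hk] at hvk
    rw [hget j hj]
    have hij' : (i : ℕ) ≤ (j : ℕ) := hij
    have hjk' : (j : ℕ) ≤ (k : ℕ) := hjk
    by_cases hji : (j : ℕ) = (i : ℕ)
    · rw [show ((j : ℕ) : ℕ) = (i : ℕ) from hji]; exact hvi
    by_cases hjk2 : (j : ℕ) = (k : ℕ)
    · rw [show ((j : ℕ) : ℕ) = (k : ℕ) from hjk2]; exact hvk
    have hIJ : (i : ℕ) < (j : ℕ) := lt_of_le_of_ne hij' (fun h => hji h.symm)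
    have hJK : (j : ℕ) < (k : ℕ) := lt_of_le_of_ne hjk' hjk2
    have hPj : P.getVert j ∈ P.support := by
      rw [← support_getElem_eq P j hj]; exact List.getElem_mem hj
    have extract : ∀ (r : ℕ) (hr : r < P.support.length), r ≠ (j : ℕ) →
        v ∈ f (P.getVert r) →
        ∃ j₁, v ∈ td.bag j₁ ∧ ∃ W : T.Walk j₁ (P.getVert r), P.getVert j ∉ W.support := by
      intro r hr hrj hv
      have hne : P.getVert j ≠ P.getVert r := by
        intro h
        exact hrj (path_getVert_inj hP (by omega) (by omega) h).symm
      rcases hv with hv | hv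
      · exact ⟨P.getVert r, hv, SimpleGraph.Walk.nil, by simp [hne]⟩
      · rw [hY _] at hv
        simp only [Set.mem_iUnion, exists_prop] at hv
        obtain ⟨j₁, ⟨hj₁S, j', ⟨w, hw⟩, hadj⟩, hvb⟩ := hv
        refine ⟨j₁, hvb, w.concat hadj, ?_⟩
        rw [SimpleGraph.Walk.support_concat]
        intro hmem
        rcases List.mem_append.mp hmem with hmem | hmem
        · exact hw _ hmem hPj
        · exact hne (List.mem_singleton.mp hmem)
    obtain ⟨j₁, hb₁, W1, hW1⟩ := extract i hi (by omega) hvi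
    obtain ⟨j₂, hb₂, W2, hW2⟩ := extract k hk (by omega) hvk
    obtain ⟨ω⟩ := (td.bag_connected v).preconnected ⟨j₁, hb₁⟩ ⟨j₂, hb₂⟩
    let hom : T.induce {i : ι | v ∈ td.bag i} →g T := ⟨Subtype.val, fun h => h⟩
    set Ω := ω.map hom with hΩ
    by_cases hmem : P.getVert j ∈ Ω.support
    · left
      rw [hΩ, SimpleGraph.Walk.support_map] at hmem
      obtain ⟨⟨y, hy⟩, _, rfl⟩ := List.mem_map.mp hmem
      exact hy
    · exfalso
      have hsep := sep_middle hTacyc hP hIJ hJK (by omega)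
        ((W1.reverse.append Ω).append W2)
      rw [SimpleGraph.Walk.mem_support_append_iff, SimpleGraph.Walk.mem_support_append_iff] at hsep
      rcases hsep with (hs | hs) | hs
      · rw [SimpleGraph.Walk.support_reverse, List.mem_reverse] at hs; exact hW1 hs
      · exact hmem hs
      · exact hW2 hs
  · intro B hB
    obtain ⟨q, hq, rfl⟩ := List.mem_map.mp hB
    exact le_trans (Set.ncard_union_le _ _) (add_le_add (hbags q) (hYs q hq))
end

section
/- Let (T, {X_i}_{i∈V(T)}) be a tree decomposition of a connected finite simple graph G in which every bag has size at most t, let b be a node of T whose bag B = X_b is nonempty, let t₁, …, t_p be some of the neighbors of b in T, let T_i be the connected component of T − b containing t_i, let V_i be the union of the bags of the nodes of T_i, and set W = B ∪ V₁ ∪ ⋯ ∪ V_p. If every connected component of the induced subgraph G[W] has at most s vertices, then |W| ≤ t·s. -/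
/-- Let `(T, {X_i})` be a tree decomposition of a connected finite simple graph `G` with all
bags of size at most `t`, `b` a node of `T` with nonempty bag `B`, `t₁, …, t_p` some
neighbors of `b` in `T`, `T_i` the connected component of `T − b` containing `t_i`
(described via walks avoiding `b`), `V_i` the union of the bags of the nodes of `T_i`, and
`W = B ∪ V₁ ∪ ⋯ ∪ V_p`.  If every connected component of `G[W]` (the set of vertices of `W`
reachable from a given vertex of `W` by walks staying inside `W`) has at most `s` vertices,
then `|W| ≤ t · s`. -/
theorem size_le_of_small_components {V ι : Type*} [Fintype V] [Fintype ι]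
    (G : SimpleGraph V) (hG : G.Connected)
    (T : SimpleGraph ι) (td : TreeDecomp G T)
    (t : ℕ) (hbags : ∀ i : ι, (td.bag i).ncard ≤ t)
    (b : ι) (hb : (td.bag b).Nonempty)
    (p : ℕ) (tn : Fin p → ι) (htn : ∀ i, T.Adj b (tn i))
    (Vi : Fin p → Set V)
    (hVi : ∀ i, Vi i = ⋃ j ∈ {j : ι | ∃ w : T.Walk (tn i) j, b ∉ w.support}, td.bag j)
    (W : Set V) (hW : W = td.bag b ∪ ⋃ i, Vi i)
    (s : ℕ)
    (hcomp : ∀ v ∈ W,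
      {w ∈ W | ∃ q : G.Walk v w, ∀ x ∈ q.support, x ∈ W}.ncard ≤ s) :
    W.ncard ≤ t * s := by
  classical
  -- Step 1: a neighbor of a vertex of `W \ B` is in `W`.
  have step1 : ∀ x ∈ W, x ∉ td.bag b → ∀ y, G.Adj x y → y ∈ W := by
    intro x hxW hxB y hxy
    rw [hW] at hxW
    rcases hxW with hxB' | hxV
    · exact absurd hxB' hxB
    rw [Set.mem_iUnion] at hxV
    obtain ⟨i, hxi⟩ := hxV
    rw [hVi i] at hxi
    simp only [Set.mem_iUnion] at hxi
    obtain ⟨j, ⟨wj, hwj⟩, hxj⟩ := hxi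
    obtain ⟨k, hxk, hyk⟩ := td.adj_bag hxy
    -- get a walk from j to k in T avoiding b
    have hconn := td.bag_connected x
    have hreach := hconn ⟨j, hxj⟩ ⟨k, hxk⟩
    obtain ⟨wjk⟩ := hreach
    let wjk' := wjk.map (SimpleGraph.Embedding.induce {i : ι | x ∈ td.bag i}).toHom
    have hsupp : ∀ z ∈ wjk'.support, x ∈ td.bag z := by
      intro z hz
      rw [SimpleGraph.Walk.support_map] at hz
      simp only [List.mem_map] at hz
      obtain ⟨⟨z', hz'⟩, _, rfl⟩ := hz
      exact hz'
    have hbnot : b ∉ wjk'.support := fun hc => hxB (hsupp b hc)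
    have hwalk : ∃ w : T.Walk (tn i) k, b ∉ w.support := by
      refine ⟨wj.append wjk', ?_⟩
      suffices hs : b ∉ wj.support ++ wjk'.support.tail from
        fun hc => hs (cast (congrArg (b ∈ ·) (SimpleGraph.Walk.support_append wj wjk')) hc)
      intro hc
      rcases List.mem_append.mp hc with h | h
      · exact hwj h
      · exact hbnot (List.mem_of_mem_tail h)
    rw [hW]
    right
    rw [Set.mem_iUnion]
    refine ⟨i, ?_⟩
    rw [hVi i]
    simp only [Set.mem_iUnion]
    exact ⟨k, hwalk, hyk⟩
  -- Step 2: every vertex of W is connected within W to a vertex of B.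
  have step2 : ∀ v ∈ W, ∃ z ∈ td.bag b, ∃ q : G.Walk z v, ∀ x ∈ q.support, x ∈ W := by
    obtain ⟨u, hu⟩ := hb
    have huW : u ∈ W := by rw [hW]; exact Or.inl hu
    intro v hvW
    obtain ⟨w⟩ := hG v u
    -- induct on the walk
    suffices h : ∀ (v u' : V) (w : G.Walk v u'), u' ∈ td.bag b → v ∈ W →
        ∃ z ∈ td.bag b, ∃ q : G.Walk v z, ∀ x ∈ q.support, x ∈ W by
      obtain ⟨z, hz, q, hq⟩ := h v u w hu hvW
      refine ⟨z, hz, q.reverse, ?_⟩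
      intro x hx
      rw [SimpleGraph.Walk.support_reverse] at hx
      exact hq x (List.mem_reverse.mp hx)
    clear hvW v w
    intro v u' w
    induction w with
    | nil =>
      intro hu' hvW
      exact ⟨_, hu', SimpleGraph.Walk.nil, by simp [hvW]⟩
    | cons h w ih =>
      rename_i v y _
      intro hu' hvW
      by_cases hvb : v ∈ td.bag b
      · exact ⟨v, hvb, SimpleGraph.Walk.nil, by simp [hvW]⟩
      · have hyW : y ∈ W := step1 v hvW hvb y h
        obtain ⟨z, hz, q, hq⟩ := ih hu' hyW
        refine ⟨z, hz, SimpleGraph.Walk.cons h q, ?_⟩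
        intro x hx
        rw [SimpleGraph.Walk.support_cons, List.mem_cons] at hx
        rcases hx with hx | hx
        · exact hx ▸ hvW
        · exact hq x hx
  -- Step 3: W is covered by components of elements of B.
  set S : V → Set V := fun z => {w ∈ W | ∃ q : G.Walk z w, ∀ x ∈ q.support, x ∈ W} with hS
  have hcover : W ⊆ ⋃ z ∈ td.bag b, S z := by
    intro v hv
    obtain ⟨z, hz, q, hq⟩ := step2 v hv
    simp only [Set.mem_iUnion]
    exact ⟨z, hz, hv, q, hq⟩
  -- Counting
  have hBfin : (td.bag b).Finite := Set.toFinite _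
  have hle : W.ncard ≤ (td.bag b).ncard * s := by
    calc W.ncard ≤ (⋃ z ∈ td.bag b, S z).ncard :=
          Set.ncard_le_ncard hcover (Set.toFinite _)
      _ = (⋃ z ∈ hBfin.toFinset, S z).ncard := by
          congr 1; ext x; simp only [Set.mem_iUnion, Set.Finite.mem_toFinset]
      _ ≤ ∑ z ∈ hBfin.toFinset, (S z).ncard := by
          classical
          induction hBfin.toFinset using Finset.induction with
          | empty => simp
          | insert a s' hni ih =>
            rw [Finset.set_biUnion_insert, Finset.sum_insert hni]
            exact le_trans (Set.ncard_union_le _ _) (Nat.add_le_add_left ih _)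
      _ ≤ ∑ z ∈ hBfin.toFinset, s := by
          apply Finset.sum_le_sum
          intro z hz
          exact hcomp z (by rw [hW]; exact Or.inl (hBfin.mem_toFinset.mp hz))
      _ = (td.bag b).ncard * s := by
          rw [Finset.sum_const, smul_eq_mul, Set.ncard_eq_toFinset_card _ hBfin]
  exact le_trans hle (Nat.mul_le_mul_right s (hbags b))
end
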